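/- Let I : ℝ^d → ℝ be continuously differentiable, let S, T_1, …, T_m : ℝ^d → ℝ^{d×d} be functions taking values in skew-symmetric matrices, let h, w_1, …, w_m ∈ ℝ, and suppose x, y ∈ ℝ^d satisfy the implicit one-step relation y = x + (h S((x+y)/2) + Σ_{r=1}^m w_r T_r((x+y)/2)) · ∫₀¹ ∇I(x + τ(y − x)) dτ. Then I(y) = I(x). (Hence the conservative numerical method exactly preserves the invariant I along every realization of the increments.) -/

import Mathlib

open Matrix
/-- One step of the conservative method
`y = x + (h S((x+y)/2) + Σ_r w_r T_r((x+y)/2)) ∫₀¹ ∇I(x + τ(y−x)) dτ`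
with skew-symmetric matrices `S(z)`, `T_r(z)` exactly preserves the invariant:
`I(y) = I(x)`. -/
theorem conservative_method_preserves_invariant
    (d m : ℕ) (I : EuclideanSpace ℝ (Fin d) → ℝ) (hI : ContDiff ℝ 1 I)
    (S : EuclideanSpace ℝ (Fin d) → Matrix (Fin d) (Fin d) ℝ)
    (T : Fin m → EuclideanSpace ℝ (Fin d) → Matrix (Fin d) (Fin d) ℝ)
    (hS : ∀ z, (S z)ᵀ = -(S z)) (hT : ∀ r z, (T r z)ᵀ = -(T r z))
    (h : ℝ) (w : Fin m → ℝ) (x y : EuclideanSpace ℝ (Fin d))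
    (hstep : y = x + Matrix.toEuclideanLin
        (h • S ((2:ℝ)⁻¹ • (x + y)) + ∑ r, w r • T r ((2:ℝ)⁻¹ • (x + y)))
        (∫ τ in (0:ℝ)..1, gradient I (x + τ • (y - x)))) :
    I y = I x := by
  classical
  set M : Matrix (Fin d) (Fin d) ℝ :=
    h • S ((2:ℝ)⁻¹ • (x + y)) + ∑ r, w r • T r ((2:ℝ)⁻¹ • (x + y)) with hM
  have hMskew : Mᵀ = -M := by
    simp only [hM, Matrix.transpose_add, Matrix.transpose_smul, Matrix.transpose_sum, hS, hT,
      smul_neg, neg_add, ← Finset.sum_neg_distrib]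
  set v : EuclideanSpace ℝ (Fin d) := y - x with hv
  set g : EuclideanSpace ℝ (Fin d) := ∫ τ in (0:ℝ)..1, gradient I (x + τ • v) with hg
  have hvMg : v = Matrix.toEuclideanLin M g := by
    rw [hv, hstep]; abel
  -- gradient is continuous
  have hgradcont : Continuous (gradient I) := by
    have hfd : Continuous (fderiv ℝ I) := hI.continuous_fderiv one_ne_zero
    have : gradient I = fun z =>
        (InnerProductSpace.toDual ℝ (EuclideanSpace ℝ (Fin d))).symm (fderiv ℝ I z) := rfl
    rw [this]
    exact (InnerProductSpace.toDual ℝ (EuclideanSpace ℝ (Fin d))).symm.continuous.comp hfd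
  have hzcont : Continuous fun τ : ℝ => x + τ • v :=
    continuous_const.add (continuous_id.smul continuous_const)
  have hint : IntervalIntegrable (fun τ : ℝ => gradient I (x + τ • v))
      MeasureTheory.volume 0 1 := (hgradcont.comp hzcont).intervalIntegrable 0 1
  -- FTC
  have hderiv : ∀ τ : ℝ, HasDerivAt (fun t : ℝ => I (x + t • v))
      (inner ℝ (gradient I (x + τ • v)) v : ℝ) τ := by
    intro τ
    have hz : HasDerivAt (fun t : ℝ => x + t • v) v τ := by
      simpa using ((hasDerivAt_id τ).smul_const v).const_add x
    have hdI : DifferentiableAt ℝ I (x + τ • v) := hI.differentiable one_ne_zero _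
    have hfde : HasFDerivAt I
        (InnerProductSpace.toDual ℝ (EuclideanSpace ℝ (Fin d)) (gradient I (x + τ • v)))
        (x + τ • v) := hasGradientAt_iff_hasFDerivAt.mp hdI.hasGradientAt
    have := hfde.comp_hasDerivAt τ hz
    simp [InnerProductSpace.toDual_apply_apply] at this ⊢; exact this
  have hkey : I y - I x = inner ℝ g v := by
    have hcontD : Continuous fun τ : ℝ => (inner ℝ (gradient I (x + τ • v)) v : ℝ) :=
      ((innerSL ℝ).flip v).continuous.comp (hgradcont.comp hzcont)
    have hFTC : ∫ τ in (0:ℝ)..1, (inner ℝ (gradient I (x + τ • v)) v : ℝ) =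
        I (x + (1:ℝ) • v) - I (x + (0:ℝ) • v) :=
      intervalIntegral.integral_eq_sub_of_hasDerivAt (fun τ _ => hderiv τ)
        (hcontD.intervalIntegrable 0 1)
    have hswap : ∫ τ in (0:ℝ)..1, (inner ℝ (gradient I (x + τ • v)) v : ℝ) =
        (inner ℝ g v : ℝ) := by
      exact ((innerSL ℝ).flip v).intervalIntegral_comp_comm hint (a := 0) (b := 1)
    have hx0 : x + (0:ℝ) • v = x := by simp
    have hy1 : x + (1:ℝ) • v = y := by simp [hv]
    rw [hx0, hy1] at hFTC
    rw [← hswap, hFTC]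
  -- skew-symmetry kills the quadratic form
  have hzero : (inner ℝ g v : ℝ) = 0 := by
    rw [hvMg]
    set g' : Fin d → ℝ := (WithLp.equiv 2 (Fin d → ℝ)) g with hg'
    have hin : (inner ℝ g (Matrix.toEuclideanLin M g) : ℝ) = g' ⬝ᵥ (M *ᵥ g') := by
      rw [Matrix.toEuclideanLin_apply, EuclideanSpace.inner_eq_star_dotProduct,
        dotProduct_comm]
      rfl
    rw [hin]
    have h1 : g' ⬝ᵥ M *ᵥ g' = Mᵀ *ᵥ g' ⬝ᵥ g' := by
      rw [Matrix.dotProduct_mulVec, ← Matrix.vecMul_transpose, Matrix.transpose_transpose]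
    have h2 : g' ⬝ᵥ M *ᵥ g' = -(g' ⬝ᵥ M *ᵥ g') := by
      conv_lhs => rw [h1, hMskew, Matrix.neg_mulVec, neg_dotProduct,
        dotProduct_comm]
    linarith
  have : I y - I x = 0 := by rw [hkey, hzero]
  linarith
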